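/- For every (p,z) ∈ V × W one has the sign-flip energy identity B((p,z), (S_V p, −S_W z)) = ‖p‖_V² + q_c(z). Consequently, if δ ≥ 0, ℓ : V → ℝ is a linear functional with |ℓ(r)| ≤ δ·‖r‖_V for all r ∈ V, and (p,z) ∈ V × W satisfies B((p,z),(r,v)) = ℓ(r) for all (r,v) ∈ V × W, then ‖p‖_V² + q_c(z) ≤ δ·‖p‖_V; in particular ‖p‖_V ≤ δ and q_c(z) ≤ δ²/4. -/
import Mathlib


/-- sign-flip energy identity and stability, abstract HDG
structure.  For every `(p, z) ∈ V × W`,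
`B((p,z), (SV p, -SW z)) = ‖p‖² + q_c(z)`.  Consequently, if `|ℓ(r)| ≤ δ ‖r‖`
and `(p, z)` satisfies `B((p,z),(r,v)) = ℓ(r)` for all `(r, v)`, then
`‖p‖² + q_c(z) ≤ δ ‖p‖`, hence `‖p‖ ≤ δ` and `q_c(z) ≤ δ²/4`. -/
theorem hdg_sign_flip_energy_identity
    (V W : Type*) [NormedAddCommGroup V] [InnerProductSpace ℝ V]
    [AddCommGroup W] [Module ℝ W] (N : Seminorm ℝ W)
    (a : V →ₗ[ℝ] V →ₗ[ℝ] ℝ) (b : W →ₗ[ℝ] V →ₗ[ℝ] ℝ) (c : W →ₗ[ℝ] W →ₗ[ℝ] ℝ)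
    (SV : V →ₗ[ℝ] V) (SW : W →ₗ[ℝ] W)
    (ha1 : ∀ p : V, a p (SV p) = ‖p‖ ^ 2)
    (ha2 : ∀ r : V, ‖SV r‖ ≤ ‖r‖)
    (ha3 : ∀ p r : V, |a p r| ≤ ‖p‖ * ‖r‖)
    (hc0 : ∀ z : W, 0 ≤ c z (SW z))
    (hc1 : ∀ z : W, c (SW z) (SW (SW z)) ≤ c z (SW z))
    (hcN : ∀ z : W, N (SW z) ≤ N z)
    (hb : ∀ (z : W) (r : V), b z (SV r) = b (SW z) r) :
    (∀ (p : V) (z : W),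
      a p (SV p) + b z (SV p) + b (-(SW z)) p - c z (-(SW z))
        = ‖p‖ ^ 2 + c z (SW z)) ∧
    (∀ (δ : ℝ), 0 ≤ δ → ∀ ℓ : V →ₗ[ℝ] ℝ, (∀ r : V, |ℓ r| ≤ δ * ‖r‖) →
      ∀ (p : V) (z : W),
        (∀ (r : V) (v : W), a p r + b z r + b v p - c z v = ℓ r) →
        ‖p‖ ^ 2 + c z (SW z) ≤ δ * ‖p‖ ∧ ‖p‖ ≤ δ ∧ c z (SW z) ≤ δ ^ 2 / 4) := by
  have key : ∀ (p : V) (z : W),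
      a p (SV p) + b z (SV p) + b (-(SW z)) p - c z (-(SW z))
        = ‖p‖ ^ 2 + c z (SW z) := by
    intro p z
    rw [ha1, hb, map_neg, LinearMap.neg_apply, map_neg]
    ring
  refine ⟨key, ?_⟩
  intro δ hδ ℓ hℓ p z hB
  have h1 : ‖p‖ ^ 2 + c z (SW z) ≤ δ * ‖p‖ := by
    have := hB (SV p) (-(SW z))
    rw [key p z] at this
    calc ‖p‖ ^ 2 + c z (SW z) = ℓ (SV p) := this
      _ ≤ |ℓ (SV p)| := le_abs_self _
      _ ≤ δ * ‖SV p‖ := hℓ _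
      _ ≤ δ * ‖p‖ := by nlinarith [ha2 p]
  have hq := hc0 z
  have hp : ‖p‖ ≤ δ := by nlinarith [norm_nonneg p]
  exact ⟨h1, hp, by nlinarith [sq_nonneg (‖p‖ - δ/2)]⟩
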